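/- arXiv:2603.19419 — 3 statements merged into one kernel-verified Lean document; each statement's English description precedes it below -/
import Mathlib

section
/- Let γ be a basic ℓ-cover of a matroid M on a finite ground set E. Then there exists a matroid M(γ) with ground set E whose bases are exactly the focal bases of γ, i.e., the bases F of M with γ(F) = ℓ. In particular M(γ) has the same rank as M. -/
open Matroid

/-- The total weight `γ(F) = ∑_{i ∈ F} γ(i)` of a finite set `F` under `γ`. -/
noncomputable def setWt {α : Type*} [Fintype α] (γ : α → ℕ) (F : Set α) : ℕ :=
  ∑ i ∈ F.toFinite.toFinset, γ i

/-- `γ` is an `ℓ`-cover of the family `𝒟` if `γ(F) ≥ ℓ` for every `F ∈ 𝒟`. -/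
def IsCoverOn {α : Type*} [Fintype α] (𝒟 : Set (Set α)) (ℓ : ℕ) (γ : α → ℕ) : Prop :=
  ∀ F ∈ 𝒟, ℓ ≤ setWt γ F

/-- An `ℓ`-cover is basic if no pointwise-smaller distinct function is an `ℓ`-cover. -/
def IsBasicCoverOn {α : Type*} [Fintype α] (𝒟 : Set (Set α)) (ℓ : ℕ) (γ : α → ℕ) : Prop :=
  IsCoverOn 𝒟 ℓ γ ∧ ∀ γ' : α → ℕ, γ' ≤ γ → γ' ≠ γ → ¬ IsCoverOn 𝒟 ℓ γ'

section Aux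

variable {α : Type*} [Fintype α]

lemma setWt_congr {γ γ' : α → ℕ} {F : Set α} (h : ∀ i ∈ F, γ' i = γ i) :
    setWt γ' F = setWt γ F := by
  unfold setWt
  exact Finset.sum_congr rfl fun i hi => h i (by simpa using hi)

lemma setWt_insert {γ : α → ℕ} {a : α} {F : Set α} (h : a ∉ F) :
    setWt γ (insert a F) = γ a + setWt γ F := by
  classical
  unfold setWt
  rw [show (insert a F).toFinite.toFinset = insert a F.toFinite.toFinset from by ext x; simp only [Set.Finite.mem_toFinset, Finset.mem_insert, Set.mem_insert_iff],
    Finset.sum_insert (by simpa using h)]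

lemma setWt_mem_split {γ : α → ℕ} {a : α} {F : Set α} (h : a ∈ F) :
    setWt γ F = γ a + setWt γ (F \ {a}) := by
  have h1 : a ∉ F \ {a} := by simp
  rw [← setWt_insert h1, Set.insert_diff_singleton, Set.insert_eq_of_mem h]

/-- Symmetric (simultaneous) base exchange for matroids on a finite type. -/
lemma symm_exchange {M : Matroid α} {B B' : Set α} (hB : M.IsBase B) (hB' : M.IsBase B')
    {e : α} (he : e ∈ B \ B') :
    ∃ f ∈ B' \ B, M.IsBase (insert f (B \ {e})) ∧ M.IsBase (insert e (B' \ {f})) := by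
  have heE : e ∈ M.E := hB.subset_ground he.1
  have hBi := hB.indep
  have hB'i := hB'.indep
  have heB' : e ∈ M.closure B' := by rw [hB'.closure_eq]; exact heE
  set S : Set ℕ := {n | ∃ I : Set α, I ⊆ B' ∧ e ∈ M.closure I ∧ I.ncard = n} with hS
  have hSne : S.Nonempty := ⟨B'.ncard, B', Set.Subset.rfl, heB', rfl⟩
  obtain ⟨I, hIB', heI, hIcard⟩ := Nat.sInf_mem hSne
  have hmin : ∀ f ∈ I, e ∉ M.closure (I \ {f}) := by
    intro f hf hcon
    have h1 : (I \ {f}).ncard < I.ncard :=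
      Set.ncard_diff_singleton_lt_of_mem hf I.toFinite
    have h2 : (I \ {f}).ncard ∈ S :=
      ⟨I \ {f}, Set.diff_subset.trans hIB', hcon, rfl⟩
    have := Nat.sInf_le h2
    omega
  have hkey : ∀ f ∈ I, e ∉ M.closure (B' \ {f}) := by
    intro f hf hcon
    have hIf : insert f (I \ {f}) = I := by
      rw [Set.insert_diff_singleton, Set.insert_eq_of_mem hf]
    have h1 : e ∈ M.closure (insert f (I \ {f})) \ M.closure (I \ {f}) := by
      rw [hIf]; exact ⟨heI, hmin f hf⟩
    have h2 := Matroid.closure_exchange h1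
    have hsub : insert e (I \ {f}) ⊆ M.closure (B' \ {f}) := by
      refine Set.insert_subset hcon ?_
      exact (Set.diff_subset_diff_left hIB').trans
        (M.subset_closure (B' \ {f}) (Set.diff_subset.trans hB'.subset_ground))
    have hfcl : f ∈ M.closure (B' \ {f}) :=
      M.closure_subset_closure_of_subset_closure hsub h2.1
    exact hB'i.notMem_closure_diff_of_mem (hIB' hf) hfcl
  have hns : ¬ (I ⊆ M.closure (B \ {e})) := by
    intro hcon
    have h1 : M.closure I ⊆ M.closure (B \ {e}) :=
      M.closure_subset_closure_of_subset_closure hcon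
    exact hBi.notMem_closure_diff_of_mem he.1 (h1 heI)
  obtain ⟨f, hfI, hfncl⟩ := Set.not_subset.1 hns
  have hfB' : f ∈ B' := hIB' hfI
  have hfB : f ∉ B := by
    intro hfB
    have hfe : f ≠ e := by rintro rfl; exact he.2 hfB'
    exact hfncl (M.subset_closure (B \ {e})
      (Set.diff_subset.trans hB.subset_ground) ⟨hfB, hfe⟩)
  have h1 : M.Indep (insert f (B \ {e})) := by
    rw [(hBi.diff _).insert_indep_iff_of_notMem (fun h => hfB h.1)]
    exact ⟨hB'.subset_ground hfB', hfncl⟩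
  have h2 : M.Indep (insert e (B' \ {f})) := by
    rw [(hB'i.diff _).insert_indep_iff_of_notMem (fun h => he.2 h.1)]
    exact ⟨heE, hkey f hfI⟩
  exact ⟨f, ⟨hfB', hfB⟩, hB.exchange_isBase_of_indep hfB h1,
    hB'.exchange_isBase_of_indep he.2 h2⟩

end Aux

/-- for a basic `ℓ`-cover `γ` of a matroid `M`, there is a matroid `M(γ)` on the
same ground set whose bases are exactly the focal bases of `γ`; in particular it has the same
rank as `M` (all its bases have the same cardinality as the bases of `M`). -/
theorem stmt5 {α : Type*} [Fintype α] (M : Matroid α) (hE : M.E = Set.univ)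
    (ℓ : ℕ) (γ : α → ℕ) (hbasic : IsBasicCoverOn {F | M.IsBase F} ℓ γ) :
    ∃ M' : Matroid α, M'.E = M.E ∧
      (∀ F : Set α, M'.IsBase F ↔ (M.IsBase F ∧ setWt γ F = ℓ)) ∧
      (∀ B B' : Set α, M.IsBase B → M'.IsBase B' → B'.ncard = B.ncard) := by
  classical
  obtain ⟨hcov, hminimal⟩ := hbasic
  -- There exists a focal basis.
  have hfocal : ∃ B, M.IsBase B ∧ setWt γ B = ℓ := by
    by_cases hγ : ∀ i, γ i = 0
    · obtain ⟨B, hB⟩ := M.exists_isBase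
      have h0 : setWt γ B = 0 := Finset.sum_eq_zero fun i _ => hγ i
      have := hcov B hB
      exact ⟨B, hB, by omega⟩
    · push_neg at hγ
      obtain ⟨i, hi⟩ := hγ
      set γ' := Function.update γ i (γ i - 1) with hγ'
      have hle : γ' ≤ γ := by
        intro j
        rcases eq_or_ne j i with rfl | h
        · simp [hγ']
        · simp [hγ', Function.update_of_ne h]
      have hne : γ' ≠ γ := by
        intro h
        have := congrFun h i
        simp [hγ'] at this
        omega
      have hnc := hminimal γ' hle hne
      unfold IsCoverOn at hnc
      push_neg at hnc
      obtain ⟨F, hF, hlt⟩ := hnc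
      have hiF : i ∈ F := by
        by_contra hiF
        have heq : setWt γ' F = setWt γ F := setWt_congr fun j hj => by
          rw [hγ', Function.update_of_ne (by rintro rfl; exact hiF hj)]
        have := hcov F hF
        omega
      have e1 : setWt γ F = γ i + setWt γ (F \ {i}) := setWt_mem_split hiF
      have e2 : setWt γ' F = γ' i + setWt γ' (F \ {i}) := setWt_mem_split hiF
      have e3 : setWt γ' (F \ {i}) = setWt γ (F \ {i}) := setWt_congr fun j hj => by
        rw [hγ', Function.update_of_ne (by rintro rfl; exact hj.2 rfl)]
      have e4 : γ' i = γ i - 1 := by rw [hγ']; simp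
      have := hcov F hF
      exact ⟨F, hF, by omega⟩
  -- The focal bases satisfy the exchange property.
  set Bs : Set α → Prop := fun F => M.IsBase F ∧ setWt γ F = ℓ with hBs
  have hexch : Matroid.ExchangeProperty Bs := by
    rintro X Y ⟨hX, hXw⟩ ⟨hY, hYw⟩ a ha
    obtain ⟨b, hb, h1, h2⟩ := symm_exchange hX hY ha
    refine ⟨b, hb, h1, ?_⟩
    have w1 : setWt γ (insert b (X \ {a})) = γ b + setWt γ (X \ {a}) :=
      setWt_insert (fun h => hb.2 h.1)
    have w2 : setWt γ X = γ a + setWt γ (X \ {a}) := setWt_mem_split ha.1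
    have w3 : setWt γ (insert a (Y \ {b})) = γ a + setWt γ (Y \ {b}) :=
      setWt_insert (fun h => ha.2 h.1)
    have w4 : setWt γ Y = γ b + setWt γ (Y \ {b}) := setWt_mem_split hb.1
    have c1 := hcov _ h1
    have c2 := hcov _ h2
    omega
  refine ⟨Matroid.ofIsBaseOfFinite (Set.toFinite M.E) Bs hfocal hexch
    (fun B hB => hB.1.subset_ground), rfl, fun F => Iff.rfl, ?_⟩
  intro B B' hB hB'
  rw [Matroid.ofIsBaseOfFinite_isBase] at hB'
  exact hB'.1.ncard_eq_ncard_of_isBase hB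
end

section
/- Let γ be a basic ℓ-cover of a matroid M on a finite ground set E and let M(γ) be the focal matroid of γ. Let H ⊆ supp(γ) be an independent set of M(γ) with γ(H) = ℓ. Then deleting supp(γ) from the contraction M(γ) ⧸ H yields the restriction of M(γ) to E \ supp(γ): (M(γ) ⧸ H) ⧹ supp(γ) = M(γ) | (E \ supp(γ)). -/
open Matroid

/-- Matroid deletion: `M ⧹ D` is the restriction of `M` to `M.E \ D`. -/
def mdel {α : Type*} (M : Matroid α) (D : Set α) : Matroid α := M ↾ (M.E \ D)

/-- Matroid contraction: `M ⧸ C = (M✶ ⧹ C)✶`. -/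
def mcon {α : Type*} (M : Matroid α) (C : Set α) : Matroid α := (mdel M✶ C)✶

/- ### Auxiliary lemmas about `setWt` -/

lemma setWt_union {α : Type*} [Fintype α] (γ : α → ℕ) {A B : Set α} (h : Disjoint A B) :
    setWt γ (A ∪ B) = setWt γ A + setWt γ B := by
  classical
  unfold setWt
  rw [show (A ∪ B).toFinite.toFinset = A.toFinite.toFinset ∪ B.toFinite.toFinset by
      ext x; simp only [Set.Finite.mem_toFinset, Finset.mem_union, Set.mem_union]]
  exact Finset.sum_union (by
    rw [Finset.disjoint_left]
    intro a ha hb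
    simp only [Set.Finite.mem_toFinset] at ha hb
    exact h.ne_of_mem ha hb rfl)

lemma setWt_inter_support {α : Type*} [Fintype α] (γ : α → ℕ) (A : Set α) :
    setWt γ (A ∩ Function.support γ) = setWt γ A := by
  unfold setWt
  refine Finset.sum_subset ?_ ?_
  · intro x hx
    simp only [Set.Finite.mem_toFinset] at hx ⊢
    exact hx.1
  · intro x hx hx'
    simp only [Set.Finite.mem_toFinset, Set.mem_inter_iff, Function.mem_support, not_and,
      not_not] at hx hx'
    exact hx' hx

lemma setWt_lt {α : Type*} [Fintype α] (γ : α → ℕ) {A H : Set α} (hAH : A ⊆ H)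
    (hH : H ⊆ Function.support γ) (hne : A ≠ H) : setWt γ A < setWt γ H := by
  obtain ⟨x, hxH, hxA⟩ : ∃ x, x ∈ H ∧ x ∉ A := by
    by_contra h
    push_neg at h
    exact hne (hAH.antisymm h)
  refine Finset.sum_lt_sum_of_subset ?_ (i := x) ?_ ?_ ?_ (fun _ _ _ ↦ Nat.zero_le _)
  · intro a ha; simp only [Set.Finite.mem_toFinset] at ha ⊢; exact hAH ha
  · simpa [Set.Finite.mem_toFinset] using hxH
  · simpa [Set.Finite.mem_toFinset] using hxA
  · exact Nat.pos_of_ne_zero (hH hxH)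

lemma setWt_eq_zero {α : Type*} [Fintype α] {γ : α → ℕ} {A : Set α} (h : setWt γ A = 0) :
    ∀ x ∈ A, γ x = 0 := by
  intro x hx
  exact (Finset.sum_eq_zero_iff.mp h) x (by simpa [Set.Finite.mem_toFinset] using hx)

/- ### Independence in a contraction -/

lemma mcon_indep {α : Type*} (N : Matroid α) (hNE : N.E = Set.univ) {C : Set α}
    (hC : N.Indep C) (I : Set α) :
    (mcon N C).Indep I ↔ Disjoint I C ∧ N.Indep (I ∪ C) := by
  have hXE : (Set.univ : Set α) \ C ⊆ N✶.E := by rw [dual_ground, hNE]; exact Set.subset_univ _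
  have hrw : (mcon N C).Indep I ↔ I ⊆ Set.univ \ C ∧
      ∃ B, N✶.IsBasis B (Set.univ \ C) ∧ Disjoint I B := by
    unfold mcon mdel
    rw [dual_indep_iff_exists']
    simp only [restrict_ground_eq, dual_ground, hNE]
    constructor
    · rintro ⟨hIs, B, hB, hd⟩
      exact ⟨hIs, B, (isBase_restrict_iff hXE).mp hB, hd⟩
    · rintro ⟨hIs, B, hB, hd⟩
      exact ⟨hIs, B, (isBase_restrict_iff hXE).mpr hB, hd⟩
  rw [hrw]
  have hcompl : N.E \ (Set.univ \ C) = C := by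
    rw [hNE, Set.diff_diff_cancel_left (Set.subset_univ C)]
  constructor
  · rintro ⟨hIs, B, hB, hIB⟩
    obtain ⟨Bh, hBh, hBBh⟩ := hB.indep.exists_isBase_superset
    have hBeq : B = Bh ∩ (Set.univ \ C) :=
      hB.eq_of_subset_indep (hBh.indep.subset Set.inter_subset_left)
        (Set.subset_inter hBBh hB.subset) Set.inter_subset_right
    have hbasis : N✶.IsBasis (Bh ∩ (Set.univ \ C)) (Set.univ \ C) := hBeq ▸ hB
    have h2 := (hBh.inter_isBasis_iff_compl_inter_isBasis_dual (X := Set.univ \ C)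
      (by rw [dual_ground, hNE]; exact Set.subset_univ _)).mp hbasis
    rw [dual_ground, hNE] at h2
    rw [Set.diff_diff_cancel_left (Set.subset_univ C), dual_dual] at h2
    have hCsub : C ⊆ Set.univ \ Bh := by
      have := h2.eq_of_subset_indep hC Set.inter_subset_right Set.Subset.rfl
      rw [← this]
      exact Set.inter_subset_left
    have hbase : N.IsBase (N.E \ Bh) := hBh.compl_isBase_of_dual
    rw [hNE] at hbase
    have hIC : Disjoint I C := Set.disjoint_of_subset_left hIs Set.disjoint_sdiff_left
    refine ⟨hIC, hbase.indep.subset ?_⟩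
    rw [Set.union_subset_iff]
    refine ⟨?_, hCsub⟩
    intro x hxI
    refine ⟨trivial, fun hxBh ↦ ?_⟩
    have hxnC : x ∉ C := fun h ↦ hIC.ne_of_mem hxI h rfl
    have : x ∈ Bh ∩ (Set.univ \ C) := ⟨hxBh, trivial, hxnC⟩
    exact hIB.ne_of_mem hxI (hBeq ▸ this) rfl
  · rintro ⟨hIC, hInd⟩
    obtain ⟨W, hW, hsubW⟩ := hInd.exists_isBase_superset
    have hCW : C ⊆ W := Set.union_subset_iff.mp hsubW |>.2
    have hWC : W ∩ C = C := Set.inter_eq_right.mpr hCW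
    have hbas : N.IsBasis (W ∩ C) C := by rw [hWC]; exact hC.isBasis_self
    have h2 := hW.compl_inter_isBasis_of_inter_isBasis hbas
    rw [hNE] at h2
    refine ⟨fun x hxI ↦ ⟨trivial, fun hxC ↦ hIC.ne_of_mem hxI hxC rfl⟩,
      Set.univ \ W ∩ (Set.univ \ C), h2, ?_⟩
    have hIW : I ⊆ W := (Set.subset_union_left).trans hsubW
    exact Set.disjoint_of_subset_right Set.inter_subset_left
      (Set.disjoint_of_subset_left hIW Set.disjoint_sdiff_right)

/-- let `γ` be a basic `ℓ`-cover of a matroid `M` on ground set `E`, `M(γ)` the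
focal matroid of `γ` (a matroid whose bases are exactly the focal bases of `γ`), and
`H ⊆ supp γ` an independent set of `M(γ)` with `γ(H) = ℓ`. Then
`(M(γ) ⧸ H) ⧹ supp γ = M(γ) | (E \ supp γ)`. -/
theorem stmt7 {α : Type*} [Fintype α] (M : Matroid α) (hE : M.E = Set.univ)
    (ℓ : ℕ) (γ : α → ℕ) (hbasic : IsBasicCoverOn {F | M.IsBase F} ℓ γ)
    (Mγ : Matroid α) (hMγE : Mγ.E = Set.univ)
    (hMγ : ∀ F : Set α, Mγ.IsBase F ↔ (M.IsBase F ∧ setWt γ F = ℓ))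
    (H : Set α) (hHsupp : H ⊆ Function.support γ)
    (hHind : Mγ.Indep H) (hHwt : setWt γ H = ℓ) :
    mdel (mcon Mγ H) (Function.support γ) =
      Mγ ↾ ((Set.univ : Set α) \ Function.support γ) := by
  set S := Function.support γ with hS
  -- key step: adjoining H preserves independence for sets avoiding the support
  have key : ∀ I : Set α, I ⊆ Set.univ \ S → Mγ.Indep I → Mγ.Indep (I ∪ H) := by
    intro I hIs hI
    obtain ⟨B', hB', hHB'⟩ := hHind.exists_isBase_superset
    have hB'wt : setWt γ B' = ℓ := ((hMγ B').mp hB').2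
    have hB'split : setWt γ B' = setWt γ H + setWt γ (B' \ H) := by
      rw [← setWt_union γ Set.disjoint_sdiff_right, Set.union_diff_cancel hHB']
    have hB'H0 : setWt γ (B' \ H) = 0 := by omega
    obtain ⟨B'', hB'', hIB'', hB''sub⟩ := hI.exists_isBase_subset_union_isBase hB'
    have hB''wt : setWt γ B'' = ℓ := ((hMγ B'').mp hB'').2
    have hsubH : B'' ∩ S ⊆ H := by
      rintro x ⟨hxB, hxS⟩
      rcases hB''sub hxB with hxI | hxB'
      · exact absurd hxS (hIs hxI).2
      · by_contra hxH
        exact hxS (setWt_eq_zero hB'H0 x ⟨hxB', hxH⟩)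
    have hwt' : setWt γ (B'' ∩ S) = ℓ := by
      rw [hS, setWt_inter_support γ B'', hB''wt]
    have heq : B'' ∩ S = H := by
      by_contra hne
      have := setWt_lt γ hsubH hHsupp hne
      omega
    have hHB'' : H ⊆ B'' := heq ▸ Set.inter_subset_left
    exact hB''.indep.subset (Set.union_subset hIB'' hHB'')
  -- ground sets
  have hconE : (mcon Mγ H).E = Set.univ \ H := by
    simp [mcon, mdel, hMγE]
  have hHS : H ∪ S = S := Set.union_eq_self_of_subset_left hHsupp
  have hgroundL : (mdel (mcon Mγ H) S).E = Set.univ \ S := by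
    simp only [mdel, restrict_ground_eq, hconE]
    rw [Set.diff_diff, hHS]
  refine ext_indep (by simpa using hgroundL) ?_
  intro I hI
  rw [hgroundL] at hI
  have hIH : Disjoint I H := Set.disjoint_of_subset_left hI
    (Set.disjoint_of_subset_right hHsupp Set.disjoint_sdiff_left)
  have hcon := mcon_indep Mγ hMγE hHind
  constructor
  · intro h
    have h1 : (mcon Mγ H).Indep I := by
      have := (restrict_indep_iff.mp h).1
      exact this
    obtain ⟨-, hind⟩ := (hcon I).mp h1
    exact restrict_indep_iff.mpr ⟨hind.subset Set.subset_union_left, hI⟩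
  · intro h
    obtain ⟨hind, -⟩ := restrict_indep_iff.mp h
    refine restrict_indep_iff.mpr ⟨(hcon I).mpr ⟨hIH, key I hI hind⟩, ?_⟩
    rw [hconE, Set.diff_diff, hHS]
    exact hI
end

section
/- Let γ be a basic ℓ-cover of a matroid M on a finite ground set E with γ(i) ≤ 1 for all i ∈ E (γ squarefree), and let M(γ) be the focal matroid of γ. Then the restriction of M(γ) to the complement of the support of γ coincides with the restriction of M: M(γ) | (E \ supp(γ)) = M | (E \ supp(γ)). -/
open Matroid

lemma setWt_mono {α : Type*} [Fintype α] (γ : α → ℕ) {F G : Set α} (h : F ⊆ G) :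
    setWt γ F ≤ setWt γ G :=
  Finset.sum_le_sum_of_subset (by simpa using h)

lemma setWt_exchange {α : Type*} [Fintype α] (γ : α → ℕ) {B : Set α} {j e : α}
    (hj : j ∈ B) (he : e ∉ B) :
    setWt γ (insert e (B \ {j})) + γ j = setWt γ B + γ e := by
  classical
  unfold setWt
  have h1 : (insert e (B \ {j})).toFinite.toFinset
      = insert e (B.toFinite.toFinset.erase j) := by
    ext x
    simp only [Set.Finite.mem_toFinset, Set.mem_insert_iff, Set.mem_diff,
      Set.mem_singleton_iff, Finset.mem_insert, Finset.mem_erase]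
    tauto
  have he' : e ∉ B.toFinite.toFinset.erase j := by
    simp only [Finset.mem_erase, Set.Finite.mem_toFinset]
    tauto
  have h2 := Finset.sum_erase_add B.toFinite.toFinset γ
    (show j ∈ B.toFinite.toFinset by simpa using hj)
  rw [h1, Finset.sum_insert he']
  omega

lemma exists_pos_wt {α : Type*} [Fintype α] (γ : α → ℕ) {B F : Set α}
    (h : setWt γ F < setWt γ B) : ∃ j, j ∈ B ∧ j ∉ F ∧ 0 < γ j := by
  by_contra hc
  push_neg at hc
  have hsub : (B ∩ F).toFinite.toFinset ⊆ B.toFinite.toFinset := by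
    intro x hx
    simp only [Set.Finite.mem_toFinset, Set.mem_inter_iff] at hx ⊢
    exact hx.1
  have heq : setWt γ (B ∩ F) = setWt γ B := by
    refine Finset.sum_subset hsub ?_
    intro x hx hnx
    simp only [Set.Finite.mem_toFinset, Set.mem_inter_iff, not_and] at hx hnx
    exact Nat.le_zero.mp (hc x hx (hnx hx))
  have hle : setWt γ (B ∩ F) ≤ setWt γ F := setWt_mono γ Set.inter_subset_right
  omega

/-- Any basis containing `I` (with `γ` vanishing on `I`) can be exchanged into a focal
basis containing `I`, by induction on `|B \ F|` for a fixed focal basis `F`. -/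
lemma extend_to_focal {α : Type*} [Fintype α] (M : Matroid α) (ℓ : ℕ) (γ : α → ℕ)
    (hcov : ∀ B, M.IsBase B → ℓ ≤ setWt γ B)
    {I F : Set α} (hF : M.IsBase F) (hFw : setWt γ F = ℓ)
    (hI : ∀ i ∈ I, γ i = 0) :
    ∀ n (B : Set α), M.IsBase B → I ⊆ B → (B \ F).toFinite.toFinset.card ≤ n →
      ∃ B', M.IsBase B' ∧ I ⊆ B' ∧ setWt γ B' = ℓ := by
  classical
  intro n
  induction n with
  | zero =>
    intro B hB hIB hcard
    have hempty : B \ F = ∅ := by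
      have := Finset.card_eq_zero.mp (Nat.le_zero.mp hcard)
      rwa [Set.Finite.toFinset_eq_empty] at this
    have hBF : B ⊆ F := Set.diff_eq_empty.mp hempty
    refine ⟨B, hB, hIB, ?_⟩
    rw [hB.eq_of_subset_isBase hF hBF]
    exact hFw
  | succ n ih =>
    intro B hB hIB hcard
    by_cases hw : setWt γ B = ℓ
    · exact ⟨B, hB, hIB, hw⟩
    · have hlt : setWt γ F < setWt γ B := by
        have := hcov B hB; omega
      obtain ⟨j, hjB, hjF, hjpos⟩ := exists_pos_wt γ hlt
      obtain ⟨e, heF, hbase⟩ := hB.exchange hF ⟨hjB, hjF⟩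
      have hjI : j ∉ I := fun h => by
        have := hI j h; omega
      refine ih (insert e (B \ {j})) hbase ?_ ?_
      · intro x hx
        exact Set.mem_insert_of_mem _ ⟨hIB hx, fun h => hjI (h ▸ hx)⟩
      · have hjmem : j ∈ (B \ F).toFinite.toFinset := by
          simp only [Set.Finite.mem_toFinset, Set.mem_diff]
          exact ⟨hjB, hjF⟩
        have hsub : (insert e (B \ {j}) \ F).toFinite.toFinset
            ⊆ (B \ F).toFinite.toFinset.erase j := by
          intro x hx
          simp only [Set.Finite.mem_toFinset, Set.mem_diff, Set.mem_insert_iff,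
            Set.mem_singleton_iff, Finset.mem_erase] at hx ⊢
          obtain ⟨(rfl | ⟨hxB, hxj⟩), hxF⟩ := hx
          · exact absurd heF.1 hxF
          · exact ⟨hxj, hxB, hxF⟩
        have hc := Finset.card_le_card hsub
        rw [Finset.card_erase_of_mem hjmem] at hc
        have hpos : 1 ≤ (B \ F).toFinite.toFinset.card :=
          Finset.card_pos.mpr ⟨j, hjmem⟩
        omega

/-- let `γ` be a squarefree basic `ℓ`-cover of a matroid `M` (i.e. `γ(i) ≤ 1`
for all `i`) and `M(γ)` the focal matroid of `γ`. Then
`M(γ) | (E \ supp γ) = M | (E \ supp γ)`. -/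
theorem stmt8 {α : Type*} [Fintype α] (M : Matroid α) (hE : M.E = Set.univ)
    (ℓ : ℕ) (γ : α → ℕ) (hbasic : IsBasicCoverOn {F | M.IsBase F} ℓ γ)
    (hsqfree : ∀ i : α, γ i ≤ 1)
    (Mγ : Matroid α) (hMγE : Mγ.E = Set.univ)
    (hMγ : ∀ F : Set α, Mγ.IsBase F ↔ (M.IsBase F ∧ setWt γ F = ℓ)) :
    Mγ ↾ ((Set.univ : Set α) \ Function.support γ) =
      M ↾ ((Set.univ : Set α) \ Function.support γ) := by
  classical
  obtain ⟨hcov, hbmin⟩ := hbasic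
  have hcov' : ∀ B, M.IsBase B → ℓ ≤ setWt γ B := fun B hB => hcov B hB
  -- a focal basis exists
  have hfocal : ∃ F, M.IsBase F ∧ setWt γ F = ℓ := by
    by_cases hsupp : ∃ i, 0 < γ i
    · obtain ⟨i, hi⟩ := hsupp
      set γ' : α → ℕ := fun x => if x = i then 0 else γ x with hγ'
      have hle : γ' ≤ γ := fun x => by
        by_cases h : x = i <;> simp [hγ', h]
      have hne : γ' ≠ γ := fun h => by
        have := congrFun h i
        simp [hγ'] at this
        omega
      have hnc := hbmin γ' hle hne
      rw [IsCoverOn] at hnc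
      push_neg at hnc
      obtain ⟨F, hF, hFlt⟩ := hnc
      refine ⟨F, hF, ?_⟩
      have hge := hcov' F hF
      have key : setWt γ F ≤ setWt γ' F + γ i := by
        unfold setWt
        calc ∑ x ∈ F.toFinite.toFinset, γ x
            ≤ ∑ x ∈ F.toFinite.toFinset, (γ' x + if x = i then γ i else 0) := by
              refine Finset.sum_le_sum ?_
              intro x _
              by_cases h : x = i <;> simp [hγ', h]
          _ = (∑ x ∈ F.toFinite.toFinset, γ' x)
              + ∑ x ∈ F.toFinite.toFinset, (if x = i then γ i else 0) := by
              rw [Finset.sum_add_distrib]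
          _ ≤ (∑ x ∈ F.toFinite.toFinset, γ' x) + γ i := by
              gcongr
              rw [Finset.sum_ite_eq' F.toFinite.toFinset i (fun _ => γ i)]
              split <;> omega
      have hi1 := hsqfree i
      omega
    · push_neg at hsupp
      obtain ⟨B, hB⟩ := M.exists_isBase
      have hz : setWt γ B = 0 := by
        unfold setWt
        exact Finset.sum_eq_zero fun x _ => Nat.le_zero.mp (hsupp x)
      have := hcov' B hB
      exact ⟨B, hB, by omega⟩
  obtain ⟨F, hF, hFw⟩ := hfocal
  refine Matroid.ext_indep (by simp [hMγE, hE]) ?_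
  intro I hIground
  have hIsub : I ⊆ (Set.univ : Set α) \ Function.support γ := by
    simpa using hIground
  have hI0 : ∀ i ∈ I, γ i = 0 := by
    intro i hiI
    have := (hIsub hiI).2
    simpa [Function.mem_support] using this
  simp only [Matroid.restrict_indep_iff]
  have hmain : Mγ.Indep I ↔ M.Indep I := by
    constructor
    · intro h
      obtain ⟨B, hB, hIB⟩ := Matroid.indep_iff.mp h
      exact Matroid.indep_iff.mpr ⟨B, ((hMγ B).mp hB).1, hIB⟩
    · intro h
      obtain ⟨B, hB, hIB⟩ := Matroid.indep_iff.mp h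
      obtain ⟨B', hB', hIB', hB'w⟩ :=
        extend_to_focal M ℓ γ hcov' hF hFw hI0 (B \ F).toFinite.toFinset.card B hB hIB le_rfl
      exact Matroid.indep_iff.mpr ⟨B', (hMγ B').mpr ⟨hB', hB'w⟩, hIB'⟩
  rw [hmain]
end
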